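/- For every t ∈ (0,1) and every x ∈ ℝ^d, tr(∇² log ρ_t(x)) = −d/t − ‖∇log ρ_t(x)‖₂² + (1/t²) ∫ ‖x − √(1−t) x₀‖₂² p_{X₀|X_t}(dx₀ | x), where p_{X₀|X_t}(dx₀ | x) denotes the conditional law of X₀ given X_t = x. -/

import Mathlib

open MeasureTheory Real Filter
open scoped ENNReal

noncomputable section

/-- Density at `x` of the Gaussian distribution `N(√(1-t)·x₀, t·I_d)`, i.e. the transition
density of `X_t = √(1-t)·X₀ + √t·Z` given `X₀ = x₀`. -/
def heatKernel (d : ℕ) (t : ℝ) (x x₀ : EuclideanSpace ℝ (Fin d)) : ℝ :=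
  (2 * π * t) ^ (-(d : ℝ) / 2) * Real.exp (-‖x - Real.sqrt (1 - t) • x₀‖ ^ 2 / (2 * t))

/-- The density `ρ_t` of `X_t = √(1-t)·X₀ + √t·Z` where `X₀ ∼ μ` and `Z ∼ N(0, I_d)`
is independent of `X₀`. -/
def rho (d : ℕ) (μ : Measure (EuclideanSpace ℝ (Fin d))) (t : ℝ)
    (x : EuclideanSpace ℝ (Fin d)) : ℝ :=
  ∫ x₀, heatKernel d t x x₀ ∂μ

/-- Density of the standard Gaussian `N(0, I_d)` on `ℝ^d`. -/
def stdGaussianDensity (d : ℕ) (z : EuclideanSpace ℝ (Fin d)) : ℝ :=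
  (2 * π) ^ (-(d : ℝ) / 2) * Real.exp (-‖z‖ ^ 2 / 2)

/-- Conditional expectation `E[f(X_t) | X₀ = x₀] = E_{Z ∼ N(0,I_d)}[f(√(1-t)·x₀ + √t·Z)]`. -/
def condExpX0 (d : ℕ) (t : ℝ) (x₀ : EuclideanSpace ℝ (Fin d))
    (f : EuclideanSpace ℝ (Fin d) → ℝ) : ℝ :=
  ∫ z, f (Real.sqrt (1 - t) • x₀ + Real.sqrt t • z) * stdGaussianDensity d z

/-- Trace of the Hessian of `f : ℝ^d → ℝ` at `x`, i.e. `∑ᵢ ∂²f/∂xᵢ² (x)`. -/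
def traceHessian (d : ℕ) (f : EuclideanSpace ℝ (Fin d) → ℝ)
    (x : EuclideanSpace ℝ (Fin d)) : ℝ :=
  ∑ i : Fin d,
    fderiv ℝ (fun y => fderiv ℝ f y (EuclideanSpace.single i 1)) x (EuclideanSpace.single i 1)

lemma aux_exp_le_inv {y : ℝ} (hy : 0 < y) : Real.exp (-y) ≤ 1 / y := by
  rw [Real.exp_neg, one_div]
  exact inv_anti₀ hy (by linarith [Real.add_one_le_exp y])

lemma aux_exp_le_inv_sq {y : ℝ} (hy : 0 < y) : Real.exp (-y) ≤ 4 / y ^ 2 := by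
  have h := Real.add_one_le_exp (y/2)
  have h2 : y^2/4 ≤ Real.exp y := by
    have : Real.exp y = Real.exp (y/2) * Real.exp (y/2) := by
      rw [← Real.exp_add]; ring_nf
    nlinarith [Real.exp_pos (y/2)]
  rw [Real.exp_neg, ← one_div]
  rw [div_le_div_iff₀ (Real.exp_pos y) (by positivity)] at *
  nlinarith [Real.exp_pos y]

lemma aux_neg_div_nonpos {t r : ℝ} (ht : 0 < t) : -r ^ 2 / (2 * t) ≤ 0 := by
  have : 0 ≤ r^2/(2*t) := by positivity
  rw [neg_div]; linarith

lemma aux1 {t : ℝ} (ht : 0 < t) (r : ℝ) (hr : 0 ≤ r) :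
    r * Real.exp (-r ^ 2 / (2 * t)) ≤ Real.sqrt (2 * t) := by
  have h2t : (0:ℝ) < 2 * t := by linarith
  have hsq : Real.sqrt (2*t) ^ 2 = 2 * t := Real.sq_sqrt h2t.le
  have hsqpos : 0 < Real.sqrt (2*t) := Real.sqrt_pos.mpr h2t
  rcases le_or_gt r (Real.sqrt (2*t)) with h | h
  · calc r * Real.exp (-r ^ 2 / (2*t)) ≤ r * 1 :=
          mul_le_mul_of_nonneg_left (Real.exp_le_one_iff.mpr (aux_neg_div_nonpos ht)) hr
    _ ≤ Real.sqrt (2*t) := by simpa using h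
  · have hrpos : 0 < r := lt_of_le_of_lt (Real.sqrt_nonneg _) h
    have hy : 0 < r^2/(2*t) := by positivity
    have hexp : Real.exp (-r^2 / (2*t)) ≤ (2*t)/r^2 := by
      have := aux_exp_le_inv hy
      rw [neg_div]
      calc Real.exp (-(r^2/(2*t))) ≤ 1/(r^2/(2*t)) := this
      _ = (2*t)/r^2 := by field_simp
    calc r * Real.exp (-r^2/(2*t)) ≤ r * ((2*t)/r^2) :=
          mul_le_mul_of_nonneg_left hexp hr
    _ = (2*t)/r := by field_simp
    _ ≤ (2*t)/Real.sqrt (2*t) := by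
          apply div_le_div_of_nonneg_left h2t.le hsqpos h.le
    _ = Real.sqrt (2*t) := by
          rw [eq_comm, eq_div_iff hsqpos.ne', ← pow_two, hsq]

lemma aux2 {t : ℝ} (ht : 0 < t) (r : ℝ) :
    r ^ 2 * Real.exp (-r ^ 2 / (2 * t)) ≤ 16 * t := by
  rcases le_or_gt (r^2) (16*t) with h | h
  · calc r^2 * Real.exp (-r^2/(2*t)) ≤ r^2 * 1 :=
      mul_le_mul_of_nonneg_left (Real.exp_le_one_iff.mpr (aux_neg_div_nonpos ht)) (sq_nonneg r)
    _ ≤ 16*t := by simpa using h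
  · have hr2 : 0 < r^2 := by nlinarith
    have hy : 0 < r^2/(2*t) := by positivity
    have hexp : Real.exp (-r^2/(2*t)) ≤ 4 / (r^2/(2*t))^2 := by
      rw [neg_div]; exact aux_exp_le_inv_sq hy
    calc r^2 * Real.exp (-r^2/(2*t)) ≤ r^2 * (4/(r^2/(2*t))^2) :=
          mul_le_mul_of_nonneg_left hexp hr2.le
    _ = 16*t^2/r^2 := by
          rw [div_pow, div_div_eq_mul_div, eq_div_iff hr2.ne']
          field_simp
          ring
          field_simp [show r ≠ 0 by rintro rfl; simp at hr2]
    _ ≤ 16*t := by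
          rw [div_le_iff₀ hr2]; nlinarith




variable {d : ℕ} {t : ℝ}

/-- First derivative of the heat kernel in `x`. -/
def hkD (d : ℕ) (t : ℝ) (x x₀ : EuclideanSpace ℝ (Fin d)) :
    EuclideanSpace ℝ (Fin d) →L[ℝ] ℝ :=
  (-(1/t) * heatKernel d t x x₀) • innerSL ℝ (x - Real.sqrt (1 - t) • x₀)

lemma heatKernel_pos (ht : 0 < t) (x x₀ : EuclideanSpace ℝ (Fin d)) :
    0 < heatKernel d t x x₀ := by
  have : (0:ℝ) < 2 * π * t := by positivity
  exact mul_pos (Real.rpow_pos_of_pos this _) (Real.exp_pos _)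

lemma heatKernel_le (ht : 0 < t) (x x₀ : EuclideanSpace ℝ (Fin d)) :
    heatKernel d t x x₀ ≤ (2 * π * t) ^ (-(d : ℝ) / 2) := by
  have h : (0:ℝ) < 2 * π * t := by positivity
  have := Real.exp_le_one_iff.mpr (aux_neg_div_nonpos (r := ‖x - Real.sqrt (1 - t) • x₀‖) ht)
  calc heatKernel d t x x₀ ≤ (2 * π * t) ^ (-(d : ℝ) / 2) * 1 :=
        mul_le_mul_of_nonneg_left this (Real.rpow_pos_of_pos h _).le
  _ = _ := mul_one _

lemma continuous_heatKernel (x : EuclideanSpace ℝ (Fin d)) :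
    Continuous (fun x₀ => heatKernel d t x x₀) := by
  unfold heatKernel
  fun_prop

lemma hasFDerivAt_heatKernel (ht : 0 < t) (x₀ x : EuclideanSpace ℝ (Fin d)) :
    HasFDerivAt (fun y => heatKernel d t y x₀) (hkD d t x x₀) x := by
  set s := Real.sqrt (1 - t)
  have h1 : HasFDerivAt (fun y : EuclideanSpace ℝ (Fin d) => y - s • x₀)
      (ContinuousLinearMap.id ℝ _) x := (hasFDerivAt_id x).sub_const _
  have h2 := h1.norm_sq
  have h3 := (h2.const_mul (-(1/(2*t)))).exp
  have h4 := h3.const_mul ((2 * π * t) ^ (-(d : ℝ) / 2))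
  have hfun : (fun y : EuclideanSpace ℝ (Fin d) =>
      (2 * π * t) ^ (-(d : ℝ) / 2) * Real.exp ((-(1/(2*t))) * ‖y - s • x₀‖ ^ 2))
      = fun y => heatKernel d t y x₀ := by
    funext y; unfold heatKernel; ring_nf; rfl
  rw [hfun] at h4
  refine h4.congr_fderiv ?_
  ext z
  simp only [hkD, ContinuousLinearMap.smul_apply, innerSL_apply_apply,
    ContinuousLinearMap.coe_smul', Pi.smul_apply, ContinuousLinearMap.comp_apply,
    ContinuousLinearMap.id_apply, smul_eq_mul]
  unfold heatKernel
  ring_nf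
  rfl

lemma norm_hkD_le (ht : 0 < t) (x x₀ : EuclideanSpace ℝ (Fin d)) :
    ‖hkD d t x x₀‖ ≤ (2 * π * t) ^ (-(d : ℝ) / 2) * Real.sqrt (2*t) / t := by
  have hC : (0:ℝ) < (2 * π * t) ^ (-(d : ℝ) / 2) :=
    Real.rpow_pos_of_pos (by positivity) _
  apply ContinuousLinearMap.opNorm_le_bound _ (by positivity)
  intro z
  set u := x - Real.sqrt (1 - t) • x₀ with hu
  have hz : ‖(hkD d t x x₀) z‖ = 1/t * heatKernel d t x x₀ * |inner ℝ u z| := by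
    simp only [hkD, ContinuousLinearMap.smul_apply, innerSL_apply_apply, smul_eq_mul,
      Real.norm_eq_abs, abs_mul, abs_neg, abs_of_pos (by positivity : (0:ℝ) < 1/t),
      abs_of_pos (heatKernel_pos ht x x₀), ← hu]
  rw [hz]
  have hinner : |inner ℝ u z| ≤ ‖u‖ * ‖z‖ := abs_real_inner_le_norm u z
  have key := aux1 ht ‖u‖ (norm_nonneg _)
  have hk1 : heatKernel d t x x₀ * ‖u‖ ≤ (2 * π * t) ^ (-(d : ℝ) / 2) * Real.sqrt (2*t) := by
    unfold heatKernel
    rw [← hu]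
    calc (2 * π * t) ^ (-(d:ℝ)/2) * Real.exp (-‖u‖ ^ 2 / (2 * t)) * ‖u‖
        = (2 * π * t) ^ (-(d:ℝ)/2) * (‖u‖ * Real.exp (-‖u‖ ^ 2 / (2 * t))) := by ring
    _ ≤ _ := mul_le_mul_of_nonneg_left key hC.le
  calc 1/t * heatKernel d t x x₀ * |inner ℝ u z|
      ≤ 1/t * heatKernel d t x x₀ * (‖u‖ * ‖z‖) := by
        apply mul_le_mul_of_nonneg_left hinner
        exact mul_nonneg (by positivity) (heatKernel_pos ht x x₀).le
  _ = 1/t * (heatKernel d t x x₀ * ‖u‖) * ‖z‖ := by ring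
  _ ≤ 1/t * ((2 * π * t) ^ (-(d : ℝ) / 2) * Real.sqrt (2*t)) * ‖z‖ := by
        apply mul_le_mul_of_nonneg_right _ (norm_nonneg z)
        apply mul_le_mul_of_nonneg_left hk1 (by positivity)
  _ = (2 * π * t) ^ (-(d : ℝ) / 2) * Real.sqrt (2*t) / t * ‖z‖ := by ring

lemma continuous_hkD (x : EuclideanSpace ℝ (Fin d)) :
    Continuous (fun x₀ => hkD d t x x₀) := by
  unfold hkD
  refine Continuous.smul (f := fun x₀ => -(1/t) * heatKernel d t x x₀)
    (g := fun x₀ => innerSL ℝ (x - Real.sqrt (1 - t) • x₀)) ?_ ?_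
  · exact (continuous_const.mul (continuous_heatKernel x))
  · exact (innerSL ℝ).continuous.comp (by fun_prop)

lemma integrable_heatKernel (ht : 0 < t) (μ : Measure (EuclideanSpace ℝ (Fin d)))
    [IsProbabilityMeasure μ] (x : EuclideanSpace ℝ (Fin d)) :
    Integrable (fun x₀ => heatKernel d t x x₀) μ := by
  refine Integrable.mono' (integrable_const ((2 * π * t) ^ (-(d : ℝ) / 2)))
    (continuous_heatKernel x).aestronglyMeasurable ?_
  filter_upwards with a
  rw [Real.norm_eq_abs, abs_of_pos (heatKernel_pos ht x a)]
  exact heatKernel_le ht x a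

lemma integrable_hkD (ht : 0 < t) (μ : Measure (EuclideanSpace ℝ (Fin d)))
    [IsProbabilityMeasure μ] (x : EuclideanSpace ℝ (Fin d)) :
    Integrable (fun x₀ => hkD d t x x₀) μ :=
  Integrable.mono' (integrable_const _) (continuous_hkD x).aestronglyMeasurable
    (Filter.Eventually.of_forall fun a => norm_hkD_le ht x a)

lemma rho_pos (ht : 0 < t) (μ : Measure (EuclideanSpace ℝ (Fin d)))
    [IsProbabilityMeasure μ] (x : EuclideanSpace ℝ (Fin d)) :
    0 < rho d μ t x := by
  rw [rho, integral_pos_iff_support_of_nonneg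
    (fun a => (heatKernel_pos ht x a).le) (integrable_heatKernel ht μ x)]
  have : Function.support (fun x₀ => heatKernel d t x x₀) = Set.univ := by
    ext a; simp [Function.mem_support, (heatKernel_pos ht x a).ne']
  rw [this]
  simp

lemma hasFDerivAt_rho (ht : 0 < t) (μ : Measure (EuclideanSpace ℝ (Fin d)))
    [IsProbabilityMeasure μ] (x : EuclideanSpace ℝ (Fin d)) :
    HasFDerivAt (rho d μ t) (∫ a, hkD d t x a ∂μ) x := by
  have := hasFDerivAt_integral_of_dominated_of_fderiv_le (𝕜 := ℝ)
    (F := fun y a => heatKernel d t y a) (F' := fun y a => hkD d t y a)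
    (bound := fun _ => (2 * π * t) ^ (-(d : ℝ) / 2) * Real.sqrt (2*t) / t)
    (x₀ := x) (μ := μ) (Metric.ball_mem_nhds x one_pos)
    (Filter.Eventually.of_forall fun y => (continuous_heatKernel y).aestronglyMeasurable)
    (integrable_heatKernel ht μ x)
    (continuous_hkD x).aestronglyMeasurable
    (Filter.Eventually.of_forall fun a => fun y _ => norm_hkD_le ht y a)
    (integrable_const _)
    (Filter.Eventually.of_forall fun a => fun y _ => hasFDerivAt_heatKernel ht a y)
  exact this

/-- Second-derivative integrand: derivative of `y ↦ hkD d t y x₀ (eᵢ)`. -/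
def hkD2 (d : ℕ) (t : ℝ) (i : Fin d) (x x₀ : EuclideanSpace ℝ (Fin d)) :
    EuclideanSpace ℝ (Fin d) →L[ℝ] ℝ :=
  (-(1/t) * heatKernel d t x x₀) • innerSL ℝ (EuclideanSpace.single i (1:ℝ))
  + (inner ℝ (EuclideanSpace.single i (1:ℝ)) (x - Real.sqrt (1 - t) • x₀) : ℝ) •
      ((-(1/t)) • hkD d t x x₀)

lemma hasFDerivAt_hkD_apply (ht : 0 < t) (i : Fin d) (x₀ x : EuclideanSpace ℝ (Fin d)) :
    HasFDerivAt (fun y => hkD d t y x₀ (EuclideanSpace.single i (1:ℝ)))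
      (hkD2 d t i x x₀) x := by
  set s := Real.sqrt (1 - t)
  set e : EuclideanSpace ℝ (Fin d) := EuclideanSpace.single i (1:ℝ) with he
  have hP : HasFDerivAt (fun y => -(1/t) * heatKernel d t y x₀)
      ((-(1/t)) • hkD d t x x₀) x := (hasFDerivAt_heatKernel ht x₀ x).const_mul _
  have hQ : HasFDerivAt (fun y : EuclideanSpace ℝ (Fin d) => (innerSL ℝ e) (y - s • x₀))
      (innerSL ℝ e) x := by
    have := ((innerSL ℝ e).hasFDerivAt (x := x - s • x₀)).comp x
      ((hasFDerivAt_id x).sub_const (s • x₀))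
    exact this
  have hPQ := hP.fun_mul hQ
  have hfun : (fun y => (-(1/t) * heatKernel d t y x₀) * (innerSL ℝ e) (y - s • x₀))
      = fun y => hkD d t y x₀ e := by
    funext y
    simp only [hkD, ContinuousLinearMap.smul_apply, innerSL_apply_apply, smul_eq_mul]
    rw [real_inner_comm]
  rw [hfun] at hPQ
  exact hPQ

lemma norm_hkD2_le (ht : 0 < t) (i : Fin d) (x x₀ : EuclideanSpace ℝ (Fin d)) :
    ‖hkD2 d t i x x₀‖ ≤ (2 * π * t) ^ (-(d : ℝ) / 2) * (17/t) := by
  have hC : (0:ℝ) < (2 * π * t) ^ (-(d : ℝ) / 2) :=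
    Real.rpow_pos_of_pos (by positivity) _
  set e : EuclideanSpace ℝ (Fin d) := EuclideanSpace.single i (1:ℝ) with he
  set u := x - Real.sqrt (1 - t) • x₀ with hu
  have hknn := (heatKernel_pos ht x x₀).le
  have hhk := heatKernel_le ht x x₀
  have he1 : ‖e‖ = 1 := by simp [he, EuclideanSpace.norm_single]
  apply ContinuousLinearMap.opNorm_le_bound _ (by positivity)
  intro z
  have hz : hkD2 d t i x x₀ z
      = (-(1/t) * heatKernel d t x x₀) * (inner ℝ e z : ℝ)
        + (inner ℝ e u : ℝ) * (-(1/t)) * ((-(1/t) * heatKernel d t x x₀) * (inner ℝ u z : ℝ)) := by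
    simp only [hkD2, hkD, ContinuousLinearMap.add_apply, ContinuousLinearMap.smul_apply,
      innerSL_apply_apply, smul_eq_mul, ← hu]
    ring
  rw [hz, Real.norm_eq_abs]
  have hie : |(inner ℝ e z : ℝ)| ≤ ‖z‖ := by
    calc |(inner ℝ e z : ℝ)| ≤ ‖e‖ * ‖z‖ := abs_real_inner_le_norm e z
    _ = ‖z‖ := by rw [he1, one_mul]
  have hiu : |(inner ℝ e u : ℝ)| ≤ ‖u‖ := by
    calc |(inner ℝ e u : ℝ)| ≤ ‖e‖ * ‖u‖ := abs_real_inner_le_norm e u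
    _ = ‖u‖ := by rw [he1, one_mul]
  have hiuz : |(inner ℝ u z : ℝ)| ≤ ‖u‖ * ‖z‖ := abs_real_inner_le_norm u z
  have habs : |(-(1/t) * heatKernel d t x x₀) * (inner ℝ e z : ℝ)
        + (inner ℝ e u : ℝ) * (-(1/t)) * ((-(1/t) * heatKernel d t x x₀) * (inner ℝ u z : ℝ))|
      ≤ (1/t) * heatKernel d t x x₀ * ‖z‖
        + ‖u‖ * (1/t) * ((1/t) * heatKernel d t x x₀ * (‖u‖ * ‖z‖)) := by
    refine (abs_add_le _ _).trans (add_le_add ?_ ?_)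
    · simp only [abs_mul, abs_neg, abs_of_pos (show (0:ℝ) < 1/t by positivity),
        abs_of_nonneg hknn]
      exact mul_le_mul_of_nonneg_left hie (by positivity)
    · simp only [abs_mul, abs_neg, abs_of_pos (show (0:ℝ) < 1/t by positivity),
        abs_of_nonneg hknn]
      have h1 : |(inner ℝ e u : ℝ)| * (1/t) ≤ ‖u‖ * (1/t) :=
        mul_le_mul_of_nonneg_right hiu (by positivity)
      have h2 : 1/t * heatKernel d t x x₀ * |(inner ℝ u z : ℝ)|
          ≤ 1/t * heatKernel d t x x₀ * (‖u‖ * ‖z‖) :=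
        mul_le_mul_of_nonneg_left hiuz (mul_nonneg (by positivity) hknn)
      exact mul_le_mul h1 h2 (by positivity)
        (mul_nonneg (norm_nonneg u) (by positivity))
  refine habs.trans ?_
  have hbig : heatKernel d t x x₀ * (‖u‖ * ‖u‖)
      ≤ (2 * π * t) ^ (-(d : ℝ) / 2) * (16 * t) := by
    have key := aux2 ht ‖u‖
    unfold heatKernel
    rw [← hu]
    calc (2 * π * t) ^ (-(d:ℝ)/2) * Real.exp (-‖u‖ ^ 2 / (2 * t)) * (‖u‖ * ‖u‖)
        = (2 * π * t) ^ (-(d:ℝ)/2) * (‖u‖^2 * Real.exp (-‖u‖ ^ 2 / (2 * t))) := by ring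
    _ ≤ _ := mul_le_mul_of_nonneg_left key hC.le
  have h16 : ‖u‖ * (1/t) * ((1/t) * heatKernel d t x x₀ * (‖u‖ * ‖z‖))
      = (1/t^2) * (heatKernel d t x x₀ * (‖u‖ * ‖u‖)) * ‖z‖ := by ring
  have h17 : (1/t) * heatKernel d t x x₀ * ‖z‖
      ≤ (1/t) * ((2 * π * t) ^ (-(d : ℝ) / 2)) * ‖z‖ := by
    apply mul_le_mul_of_nonneg_right _ (norm_nonneg z)
    exact mul_le_mul_of_nonneg_left hhk (by positivity)
  rw [h16]
  have h18 : (1/t^2) * (heatKernel d t x x₀ * (‖u‖ * ‖u‖)) * ‖z‖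
      ≤ (1/t^2) * ((2 * π * t) ^ (-(d : ℝ) / 2) * (16 * t)) * ‖z‖ := by
    apply mul_le_mul_of_nonneg_right _ (norm_nonneg z)
    exact mul_le_mul_of_nonneg_left hbig (by positivity)
  calc _ ≤ (1/t) * ((2 * π * t) ^ (-(d : ℝ) / 2)) * ‖z‖
      + (1/t^2) * ((2 * π * t) ^ (-(d : ℝ) / 2) * (16 * t)) * ‖z‖ := add_le_add h17 h18
  _ = (2 * π * t) ^ (-(d : ℝ) / 2) * (17/t) * ‖z‖ := by field_simp; ring

lemma continuous_hkD2 (i : Fin d) (x : EuclideanSpace ℝ (Fin d)) :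
    Continuous (fun x₀ => hkD2 d t i x x₀) := by
  unfold hkD2
  apply Continuous.add
  · exact ((continuous_const.mul (continuous_heatKernel x)).smul continuous_const)
  · refine Continuous.smul
      (f := fun x₀ => inner ℝ (EuclideanSpace.single i (1:ℝ)) (x - Real.sqrt (1 - t) • x₀))
      (g := fun x₀ => (-(1/t)) • hkD d t x x₀) ?_ ?_
    · exact Continuous.inner continuous_const (by fun_prop)
    · exact (continuous_const : Continuous fun _ : EuclideanSpace ℝ (Fin d) => (-(1/t) : ℝ)).smul
        (continuous_hkD x)

lemma integrable_hkD2 (ht : 0 < t) (μ : Measure (EuclideanSpace ℝ (Fin d)))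
    [IsProbabilityMeasure μ] (i : Fin d) (x : EuclideanSpace ℝ (Fin d)) :
    Integrable (fun x₀ => hkD2 d t i x x₀) μ :=
  Integrable.mono' (integrable_const _) (continuous_hkD2 i x).aestronglyMeasurable
    (Filter.Eventually.of_forall fun a => norm_hkD2_le ht i x a)

lemma integrable_hkD_apply (ht : 0 < t) (μ : Measure (EuclideanSpace ℝ (Fin d)))
    [IsProbabilityMeasure μ] (x v : EuclideanSpace ℝ (Fin d)) :
    Integrable (fun x₀ => hkD d t x x₀ v) μ := by
  refine Integrable.mono' (g := fun _ => (2 * π * t) ^ (-(d : ℝ) / 2) * Real.sqrt (2*t) / t * ‖v‖)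
    (integrable_const _)
    (((continuous_hkD x).comp continuous_id).clm_apply continuous_const).aestronglyMeasurable ?_
  filter_upwards with a
  calc ‖hkD d t x a v‖ ≤ ‖hkD d t x a‖ * ‖v‖ := (hkD d t x a).le_opNorm v
  _ ≤ _ := mul_le_mul_of_nonneg_right (norm_hkD_le ht x a) (norm_nonneg v)

lemma hasFDerivAt_B (ht : 0 < t) (μ : Measure (EuclideanSpace ℝ (Fin d)))
    [IsProbabilityMeasure μ] (i : Fin d) (x : EuclideanSpace ℝ (Fin d)) :
    HasFDerivAt (fun y => ∫ a, hkD d t y a (EuclideanSpace.single i (1:ℝ)) ∂μ)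
      (∫ a, hkD2 d t i x a ∂μ) x := by
  apply hasFDerivAt_integral_of_dominated_of_fderiv_le (𝕜 := ℝ)
    (bound := fun _ => (2 * π * t) ^ (-(d : ℝ) / 2) * (17/t)) (Metric.ball_mem_nhds x one_pos)
  · exact Filter.Eventually.of_forall fun y =>
      (((continuous_hkD y).clm_apply continuous_const)).aestronglyMeasurable
  · exact integrable_hkD_apply ht μ x _
  · exact (continuous_hkD2 i x).aestronglyMeasurable
  · exact Filter.Eventually.of_forall fun a => fun y _ => norm_hkD2_le ht i y a
  · exact integrable_const _
  · exact Filter.Eventually.of_forall fun a => fun y _ => hasFDerivAt_hkD_apply ht i a y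

lemma hkD_apply (x a v : EuclideanSpace ℝ (Fin d)) :
    hkD d t x a v = -(1/t) * heatKernel d t x a * (inner ℝ (x - Real.sqrt (1-t) • a) v : ℝ) := by
  simp only [hkD, ContinuousLinearMap.smul_apply, innerSL_apply_apply, smul_eq_mul]

lemma single_self_inner (i : Fin d) :
    (inner ℝ (EuclideanSpace.single i (1:ℝ)) (EuclideanSpace.single i (1:ℝ)) : ℝ) = 1 := by
  simp [EuclideanSpace.inner_single_right, EuclideanSpace.single_apply]

lemma hkD2_apply_single (ht : 0 < t) (i : Fin d) (x a : EuclideanSpace ℝ (Fin d)) :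
    hkD2 d t i x a (EuclideanSpace.single i (1:ℝ))
      = heatKernel d t x a *
        ((inner ℝ (x - Real.sqrt (1-t) • a) (EuclideanSpace.single i (1:ℝ)) : ℝ)^2/t^2 - 1/t) := by
  simp only [hkD2, ContinuousLinearMap.add_apply, ContinuousLinearMap.smul_apply,
    innerSL_apply_apply, smul_eq_mul, hkD_apply, single_self_inner]
  rw [real_inner_comm (EuclideanSpace.single i (1:ℝ)) (x - Real.sqrt (1-t) • a)]
  field_simp
  ring

lemma sum_inner_single_sq (u : EuclideanSpace ℝ (Fin d)) :
    ∑ i : Fin d, (inner ℝ u (EuclideanSpace.single i (1:ℝ)) : ℝ)^2 = ‖u‖^2 := by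
  have h : ∀ i, (inner ℝ u (EuclideanSpace.single i (1:ℝ)) : ℝ) = u i := by
    intro i; simp [EuclideanSpace.inner_single_right]
  simp only [h]
  rw [EuclideanSpace.norm_eq, Real.sq_sqrt (by positivity)]
  congr 1; funext i; rw [Real.norm_eq_abs, sq_abs]

lemma integrable_hkD2_apply (ht : 0 < t) (μ : Measure (EuclideanSpace ℝ (Fin d)))
    [IsProbabilityMeasure μ] (i : Fin d) (x v : EuclideanSpace ℝ (Fin d)) :
    Integrable (fun x₀ => hkD2 d t i x x₀ v) μ := by
  refine Integrable.mono' (g := fun _ => (2 * π * t) ^ (-(d : ℝ) / 2) * (17/t) * ‖v‖)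
    (integrable_const _)
    ((continuous_hkD2 i x).clm_apply continuous_const).aestronglyMeasurable ?_
  filter_upwards with a
  calc ‖hkD2 d t i x a v‖ ≤ ‖hkD2 d t i x a‖ * ‖v‖ := (hkD2 d t i x a).le_opNorm v
  _ ≤ _ := mul_le_mul_of_nonneg_right (norm_hkD2_le ht i x a) (norm_nonneg v)

lemma integrable_normsq_hk (ht : 0 < t) (μ : Measure (EuclideanSpace ℝ (Fin d)))
    [IsProbabilityMeasure μ] (x : EuclideanSpace ℝ (Fin d)) :
    Integrable (fun a => ‖x - Real.sqrt (1-t) • a‖^2 * heatKernel d t x a) μ := by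
  refine Integrable.mono' (g := fun _ => (2 * π * t) ^ (-(d : ℝ) / 2) * (16 * t))
    (integrable_const _) (((by fun_prop : Continuous fun a : EuclideanSpace ℝ (Fin d) =>
      ‖x - Real.sqrt (1-t) • a‖^2).mul (continuous_heatKernel x))).aestronglyMeasurable ?_
  filter_upwards with a
  have hC : (0:ℝ) < (2 * π * t) ^ (-(d : ℝ) / 2) :=
    Real.rpow_pos_of_pos (by positivity) _
  rw [Real.norm_eq_abs, abs_of_nonneg (mul_nonneg (by positivity) (heatKernel_pos ht x a).le)]
  unfold heatKernel
  calc ‖x - Real.sqrt (1-t) • a‖^2 * ((2 * π * t) ^ (-(d:ℝ)/2) *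
        Real.exp (-‖x - Real.sqrt (1 - t) • a‖ ^ 2 / (2 * t)))
      = (2 * π * t) ^ (-(d:ℝ)/2) * (‖x - Real.sqrt (1-t) • a‖^2 *
        Real.exp (-‖x - Real.sqrt (1 - t) • a‖ ^ 2 / (2 * t))) := by ring
  _ ≤ _ := mul_le_mul_of_nonneg_left (aux2 ht _) hC.le



/-- **Claim 2 (identity).** For every `t ∈ (0,1)` and `x ∈ ℝ^d`,
`tr(∇² log ρ_t(x)) = −d/t − ‖∇log ρ_t(x)‖² + (1/t²) ∫ ‖x − √(1−t)x₀‖² p_{X₀|X_t}(dx₀ | x)`,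
where the conditional law of `X₀` given `X_t = x` has density
`heatKernel d t x x₀ / ρ_t(x)` with respect to the law `μ` of `X₀`. -/
theorem trace_hessian_log_density_identity
    (d : ℕ) (hd : 1 ≤ d) (μ : Measure (EuclideanSpace ℝ (Fin d))) [IsProbabilityMeasure μ]
    (t : ℝ) (ht₀ : 0 < t) (ht₁ : t < 1) (x : EuclideanSpace ℝ (Fin d)) :
    traceHessian d (fun y => Real.log (rho d μ t y)) x
      = -(d / t) - ‖gradient (fun y => Real.log (rho d μ t y)) x‖ ^ 2
        + (1 / t ^ 2) *
          ∫ x₀, ‖x - Real.sqrt (1 - t) • x₀‖ ^ 2 *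
            (heatKernel d t x x₀ / rho d μ t x) ∂μ := by
  have hρpos : ∀ y, 0 < rho d μ t y := rho_pos ht₀ μ
  set f := fun y => Real.log (rho d μ t y) with hf
  have hlog : ∀ y, HasFDerivAt f ((rho d μ t y)⁻¹ • ∫ a, hkD d t y a ∂μ) y :=
    fun y => (hasFDerivAt_rho ht₀ μ y).log (hρpos y).ne'
  have hBdef : ∀ (i : Fin d) y, fderiv ℝ f y (EuclideanSpace.single i (1:ℝ))
      = (∫ a, hkD d t y a (EuclideanSpace.single i (1:ℝ)) ∂μ) * (rho d μ t y)⁻¹ := by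
    intro i y
    rw [(hlog y).fderiv, ContinuousLinearMap.smul_apply,
      ContinuousLinearMap.integral_apply (integrable_hkD ht₀ μ y), smul_eq_mul, mul_comm]
  have hsecond : ∀ i : Fin d,
      fderiv ℝ (fun y => fderiv ℝ f y (EuclideanSpace.single i (1:ℝ))) x
        (EuclideanSpace.single i (1:ℝ))
      = (∫ a, hkD2 d t i x a (EuclideanSpace.single i (1:ℝ)) ∂μ) / rho d μ t x
        - ((∫ a, hkD d t x a (EuclideanSpace.single i (1:ℝ)) ∂μ) / rho d μ t x)^2 := by
    intro i
    have hfun : (fun y => fderiv ℝ f y (EuclideanSpace.single i (1:ℝ)))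
        = fun y => (∫ a, hkD d t y a (EuclideanSpace.single i (1:ℝ)) ∂μ) * (rho d μ t y)⁻¹ :=
      funext fun y => hBdef i y
    rw [hfun]
    have hinv : HasFDerivAt (fun y => (rho d μ t y)⁻¹)
        ((-((rho d μ t x) ^ 2)⁻¹) • (∫ a, hkD d t x a ∂μ)) x := by
      have := (hasDerivAt_inv (hρpos x).ne').comp_hasFDerivAt x (hasFDerivAt_rho ht₀ μ x)
      exact this
    have hdiv := (hasFDerivAt_B ht₀ μ i x).fun_mul hinv
    rw [hdiv.fderiv]
    simp only [ContinuousLinearMap.add_apply, ContinuousLinearMap.smul_apply, smul_eq_mul]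
    rw [ContinuousLinearMap.integral_apply (integrable_hkD2 ht₀ μ i x),
      ContinuousLinearMap.integral_apply (integrable_hkD ht₀ μ x)]
    have hρne := (hρpos x).ne'
    field_simp
    ring
  have hgrad : ‖gradient f x‖^2
      = ∑ i : Fin d, ((∫ a, hkD d t x a (EuclideanSpace.single i (1:ℝ)) ∂μ)
          / rho d μ t x)^2 := by
    have hcoord : ∀ i : Fin d,
        (inner ℝ (gradient f x) (EuclideanSpace.single i (1:ℝ)) : ℝ)
          = fderiv ℝ f x (EuclideanSpace.single i (1:ℝ)) := by
      intro i
      rw [show gradient f x = (InnerProductSpace.toDual ℝ _).symm (fderiv ℝ f x) from rfl,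
        InnerProductSpace.toDual_symm_apply]
    rw [← sum_inner_single_sq (gradient f x)]
    refine Finset.sum_congr rfl fun i _ => ?_
    rw [hcoord i, hBdef i x, div_eq_mul_inv]
  have hptwise : ∀ a, (∑ i : Fin d, hkD2 d t i x a (EuclideanSpace.single i (1:ℝ)))
      = (1/t^2) * (‖x - Real.sqrt (1-t) • a‖^2 * heatKernel d t x a)
        - ((d:ℝ)/t) * heatKernel d t x a := by
    intro a
    have hs := sum_inner_single_sq (x - Real.sqrt (1-t) • a)
    calc (∑ i : Fin d, hkD2 d t i x a (EuclideanSpace.single i (1:ℝ)))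
        = ∑ i : Fin d, (heatKernel d t x a / t^2 *
            (inner ℝ (x - Real.sqrt (1-t) • a) (EuclideanSpace.single i (1:ℝ)) : ℝ)^2
            - heatKernel d t x a / t) := by
          refine Finset.sum_congr rfl fun i _ => ?_
          rw [hkD2_apply_single ht₀ i x a]
          ring
    _ = heatKernel d t x a / t^2 *
          (∑ i : Fin d,
            (inner ℝ (x - Real.sqrt (1-t) • a) (EuclideanSpace.single i (1:ℝ)) : ℝ)^2)
          - (d:ℝ) * (heatKernel d t x a / t) := by
          rw [Finset.sum_sub_distrib, ← Finset.mul_sum, Finset.sum_const,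
            Finset.card_univ, Fintype.card_fin, nsmul_eq_mul]
    _ = _ := by rw [hs]; ring
  have hsumI : (∑ i : Fin d, ∫ a, hkD2 d t i x a (EuclideanSpace.single i (1:ℝ)) ∂μ)
      = (1/t^2) * (∫ a, ‖x - Real.sqrt (1-t) • a‖^2 * heatKernel d t x a ∂μ)
        - ((d:ℝ)/t) * rho d μ t x := by
    rw [← integral_finset_sum _ (fun i _ => integrable_hkD2_apply ht₀ μ i x _)]
    rw [show (fun a => ∑ i : Fin d, hkD2 d t i x a (EuclideanSpace.single i (1:ℝ))) = fun a =>
      (1/t^2) * (‖x - Real.sqrt (1-t) • a‖^2 * heatKernel d t x a)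
        - ((d:ℝ)/t) * heatKernel d t x a from funext hptwise]
    rw [integral_sub ((integrable_normsq_hk ht₀ μ x).const_mul _)
      ((integrable_heatKernel ht₀ μ x).const_mul _),
      integral_const_mul, integral_const_mul]
    rfl
  have hRHS : (∫ a, ‖x - Real.sqrt (1-t) • a‖^2 * (heatKernel d t x a / rho d μ t x) ∂μ)
      = (∫ a, ‖x - Real.sqrt (1-t) • a‖^2 * heatKernel d t x a ∂μ) / rho d μ t x := by
    simp_rw [← mul_div_assoc]
    exact integral_div _ _
  rw [traceHessian]
  calc (∑ i : Fin d, fderiv ℝ (fun y => fderiv ℝ f y (EuclideanSpace.single i 1)) x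
        (EuclideanSpace.single i 1))
      = ∑ i : Fin d, ((∫ a, hkD2 d t i x a (EuclideanSpace.single i (1:ℝ)) ∂μ) / rho d μ t x
        - ((∫ a, hkD d t x a (EuclideanSpace.single i (1:ℝ)) ∂μ) / rho d μ t x)^2) :=
        Finset.sum_congr rfl fun i _ => hsecond i
  _ = (∑ i : Fin d, ∫ a, hkD2 d t i x a (EuclideanSpace.single i (1:ℝ)) ∂μ) / rho d μ t x
        - ∑ i : Fin d, ((∫ a, hkD d t x a (EuclideanSpace.single i (1:ℝ)) ∂μ)
            / rho d μ t x)^2 := by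
        rw [Finset.sum_sub_distrib, ← Finset.sum_div]
  _ = -((d:ℝ) / t) - ‖gradient f x‖ ^ 2
        + (1 / t ^ 2) * ∫ x₀, ‖x - Real.sqrt (1 - t) • x₀‖ ^ 2 *
            (heatKernel d t x x₀ / rho d μ t x) ∂μ := by
        rw [hsumI, hgrad, hRHS]
        have hρne := (hρpos x).ne'
        have htne : t ≠ 0 := ht₀.ne'
        field_simp
        ring
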